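/- If CDC(𝒮) is a generalized nD-ordered combinatorial disjunctive constraint, then every minimal infeasible set with respect to CDC(𝒮) has cardinality at most 2. Specifically, if I is an infeasible set with |I| ≥ 3 such that every proper subset of I is feasible, a contradiction arises: there exists a grid index 𝐢' with I ⊆ S^{𝐢'}. -/
import Mathlib


/-- `v` lies in the grid `[d₁] × ⋯ × [dₙ]`. -/
def InGrid (n : ℕ) (dv : Fin n → ℕ) (v : Fin n → ℕ) : Prop :=
  ∀ j, 1 ≤ v j ∧ v j ≤ dv j

/-- The ℓ¹ distance between two grid indices. -/
def l1dist (n : ℕ) (a b : Fin n → ℕ) : ℕ :=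
  ∑ j : Fin n, ((a j : ℤ) - (b j : ℤ)).natAbs

/-- Every minimal infeasible set of a generalized nD-ordered CDC has cardinality at
most 2.  The family satisfies: (1) `S 𝐢 ∩ S 𝐣 = ∅` when `‖𝐢 - 𝐣‖_∞ ≥ 2`;
(2) `S 𝐢 ∩ S 𝐣 ⊆ S 𝐯` when `‖𝐢 - 𝐯‖₁ + ‖𝐯 - 𝐣‖₁ = ‖𝐢 - 𝐣‖₁`.  If `A` is an
infeasible set (contained in the ground set) all of whose proper subsets are
feasible, then `|A| ≤ 2`. -/
theorem gnd_minimal_infeasible_card_le_two {α : Type*} [DecidableEq α]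
    (n : ℕ) (dv : Fin n → ℕ) (S : (Fin n → ℕ) → Finset α)
    (h1 : ∀ i j, InGrid n dv i → InGrid n dv j →
      (∃ k, 2 ≤ ((i k : ℤ) - (j k : ℤ)).natAbs) → S i ∩ S j = ∅)
    (h2 : ∀ i j v, InGrid n dv i → InGrid n dv j → InGrid n dv v →
      l1dist n i v + l1dist n v j = l1dist n i j → S i ∩ S j ⊆ S v)
    (A : Finset α)
    (hA : ∀ a ∈ A, ∃ i, InGrid n dv i ∧ a ∈ S i)
    (hinf : ¬ ∃ i, InGrid n dv i ∧ A ⊆ S i)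
    (hmin : ∀ B ⊂ A, ∃ i, InGrid n dv i ∧ B ⊆ S i) :
    A.card ≤ 2 := by

  by_contra hcard
  push_neg at hcard
  obtain ⟨B, hBA, hB3⟩ := Finset.exists_subset_card_eq hcard
  obtain ⟨r, s, t, hrs, hrt, hst, hB⟩ := Finset.card_eq_three.mp hB3
  have hrA : r ∈ A := hBA (by simp [hB])
  have hsA : s ∈ A := hBA (by simp [hB])
  have htA : t ∈ A := hBA (by simp [hB])
  obtain ⟨ir, hir, hSr⟩ := hmin (A.erase r) (Finset.erase_ssubset hrA)
  obtain ⟨is', his, hSs⟩ := hmin (A.erase s) (Finset.erase_ssubset hsA)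
  obtain ⟨it, hit, hSt⟩ := hmin (A.erase t) (Finset.erase_ssubset htA)
  -- membership facts
  have hrs' : r ∈ S is' := hSs (Finset.mem_erase.mpr ⟨hrs, hrA⟩)
  have hrt' : r ∈ S it := hSt (Finset.mem_erase.mpr ⟨hrt, hrA⟩)
  have hsr' : s ∈ S ir := hSr (Finset.mem_erase.mpr ⟨Ne.symm hrs, hsA⟩)
  have hst' : s ∈ S it := hSt (Finset.mem_erase.mpr ⟨hst, hsA⟩)
  have htr' : t ∈ S ir := hSr (Finset.mem_erase.mpr ⟨Ne.symm hrt, htA⟩)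
  have hts' : t ∈ S is' := hSs (Finset.mem_erase.mpr ⟨Ne.symm hst, htA⟩)
  -- pairwise ℓ∞ ≤ 1
  have dist_le : ∀ (i j : Fin n → ℕ), InGrid n dv i → InGrid n dv j →
      (∃ a : α, a ∈ S i ∧ a ∈ S j) → ∀ k, ((i k : ℤ) - (j k : ℤ)).natAbs ≤ 1 := by
    intro i j hi hj ⟨a, hai, haj⟩ k
    by_contra h
    push_neg at h
    have := h1 i j hi hj ⟨k, h⟩
    have : a ∈ S i ∩ S j := Finset.mem_inter.mpr ⟨hai, haj⟩
    simp_all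
  have Ers : ∀ k, ((ir k : ℤ) - (is' k : ℤ)).natAbs ≤ 1 :=
    dist_le ir is' hir his ⟨t, htr', hts'⟩
  have Ert : ∀ k, ((ir k : ℤ) - (it k : ℤ)).natAbs ≤ 1 :=
    dist_le ir it hir hit ⟨s, hsr', hst'⟩
  have Est : ∀ k, ((is' k : ℤ) - (it k : ℤ)).natAbs ≤ 1 :=
    dist_le is' it his hit ⟨r, hrs', hrt'⟩
  -- the median index
  set v : Fin n → ℕ := fun j => if ir j = is' j then ir j else it j with hvdef
  have hv : InGrid n dv v := by
    intro j
    simp only [hvdef]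
    split
    · exact hir j
    · exact hit j
  have geo : ∀ (x y : Fin n → ℕ),
      (∀ j, ((x j : ℤ) - (v j : ℤ)).natAbs + ((v j : ℤ) - (y j : ℤ)).natAbs
        = ((x j : ℤ) - (y j : ℤ)).natAbs) →
      l1dist n x v + l1dist n v y = l1dist n x y := by
    intro x y h
    unfold l1dist
    rw [← Finset.sum_add_distrib]
    exact Finset.sum_congr rfl fun j _ => h j
  have geo_rs : l1dist n ir v + l1dist n v is' = l1dist n ir is' := by
    apply geo; intro j
    have h1 := Ers j; have h2 := Ert j; have h3 := Est j
    simp only [hvdef]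
    split <;> rename_i h <;> push_cast <;> omega
  have geo_rt : l1dist n ir v + l1dist n v it = l1dist n ir it := by
    apply geo; intro j
    have h1 := Ers j; have h2 := Ert j; have h3 := Est j
    simp only [hvdef]
    split <;> rename_i h <;> push_cast <;> omega
  have geo_st : l1dist n is' v + l1dist n v it = l1dist n is' it := by
    apply geo; intro j
    have h1 := Ers j; have h2 := Ert j; have h3 := Est j
    simp only [hvdef]
    split <;> rename_i h <;> push_cast <;> omega
  apply hinf
  refine ⟨v, hv, ?_⟩
  intro a ha
  by_cases har : a = r
  · subst har
    exact h2 is' it v his hit hv geo_st (Finset.mem_inter.mpr ⟨hrs', hrt'⟩)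
  by_cases has : a = s
  · subst has
    exact h2 ir it v hir hit hv geo_rt (Finset.mem_inter.mpr ⟨hsr', hst'⟩)
  · have h1m : a ∈ S ir := hSr (Finset.mem_erase.mpr ⟨har, ha⟩)
    have h2m : a ∈ S is' := hSs (Finset.mem_erase.mpr ⟨has, ha⟩)
    exact h2 ir is' v hir his hv geo_rs (Finset.mem_inter.mpr ⟨h1m, h2m⟩)
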